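/- For every natural number n and every natural number p, if n = 7p or n = 7p+1 then the number of indices i ∈ {0,1,...,n} with P i even equals 3p+1; if n = 7p+2 it equals 3p+2; if n = 7p+3 or n = 7p+4 it equals 3p+3; and if n = 7p+5 or n = 7p+6 it equals 3p+4. -/
import Mathlib


/-- The reindexed Perrin sequence: `P 0 = 0`, `P 1 = 3`, `P 2 = 0`, `P 3 = 2`,
and `P n = P (n-2) + P (n-3)` thereafter
(so `P 4 = 3`, `P 5 = 2`, `P 6 = 5`, ...). -/
def perrin : ℕ → ℕ
  | 0 => 0
  | 1 => 3
  | 2 => 0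
  | 3 => 2
  | n + 4 => perrin (n + 2) + perrin (n + 1)

lemma perrin_key : ∀ n, perrin (n+8) % 2 = perrin (n+1) % 2 ∧
    perrin (n+9) % 2 = perrin (n+2) % 2 ∧ perrin (n+10) % 2 = perrin (n+3) % 2 := by
  intro n
  induction n with
  | zero => refine ⟨by rfl, by rfl, by rfl⟩
  | succ m ih =>
    refine ⟨ih.2.1, ih.2.2, ?_⟩
    have h1 : perrin (m+1+10) = perrin (m+9) + perrin (m+8) := rfl
    have h2 : perrin (m+1+3) = perrin (m+2) + perrin (m+1) := rfl
    rw [h1, h2, Nat.add_mod, ih.1, ih.2.1, ← Nat.add_mod]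

lemma perrin_par : ∀ p k, perrin (7*p + k + 1) % 2 = perrin (k+1) % 2 := by
  intro p
  induction p with
  | zero => intro k; norm_num
  | succ q ih =>
    intro k
    have : 7*(q+1) + k + 1 = (7*q + k) + 8 := by ring
    rw [this, (perrin_key (7*q+k)).1]
    exact ih k

def pC (n : ℕ) : ℕ := ((Finset.range (n+1)).filter (fun i => Even (perrin i))).card

lemma pC_succ (n : ℕ) : pC (n+1) = pC n + if Even (perrin (n+1)) then 1 else 0 := by
  unfold pC
  rw [Finset.range_add_one, Finset.filter_insert]
  split
  · rw [Finset.card_insert_of_notMem (by simp)]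
  · simp

lemma perrin_even_shift (p k : ℕ) : Even (perrin (7*p + k + 1)) ↔ Even (perrin (k+1)) := by
  rw [Nat.even_iff, Nat.even_iff, perrin_par]

lemma pC_main : ∀ p, pC (7*p+1) = 3*p+1 ∧ pC (7*p+2) = 3*p+2 ∧ pC (7*p+3) = 3*p+3 ∧
    pC (7*p+4) = 3*p+3 ∧ pC (7*p+5) = 3*p+4 ∧ pC (7*p+6) = 3*p+4 ∧ pC (7*p+7) = 3*p+4 := by
  intro p
  induction p with
  | zero => refine ⟨by decide, by decide, by decide, by decide, by decide, by decide, by decide⟩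
  | succ q ih =>
    have key : ∀ k, pC (7*(q+1)+(k+1)) = pC (7*(q+1)+k) + if Even (perrin (k+1)) then 1 else 0 := by
      intro k
      have h : 7*(q+1)+(k+1) = (7*(q+1)+k)+1 := by ring
      rw [h, pC_succ]
      simp only [perrin_even_shift (q+1) k]
    have h0 : pC (7*(q+1)) = 3*q+4 := by
      have : 7*(q+1) = 7*q+7 := by ring
      rw [this]; exact ih.2.2.2.2.2.2
    have h1 : pC (7*(q+1)+1) = 3*q+4 := by
      have := key 0; simp only [Nat.add_zero, Nat.zero_add] at this
      rw [h0, if_neg (by decide)] at this; simpa using this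
    have h2 : pC (7*(q+1)+2) = 3*q+5 := by
      have := key 1; rw [h1, if_pos (by decide)] at this; exact this
    have h3 : pC (7*(q+1)+3) = 3*q+6 := by
      have := key 2; rw [h2, if_pos (by decide)] at this; exact this
    have h4 : pC (7*(q+1)+4) = 3*q+6 := by
      have := key 3; rw [h3, if_neg (by decide)] at this; exact this
    have h5 : pC (7*(q+1)+5) = 3*q+7 := by
      have := key 4; rw [h4, if_pos (by decide)] at this; exact this
    have h6 : pC (7*(q+1)+6) = 3*q+7 := by
      have := key 5; rw [h5, if_neg (by decide)] at this; exact this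
    have h7 : pC (7*(q+1)+7) = 3*q+7 := by
      have := key 6; rw [h6, if_neg (by decide)] at this; exact this
    refine ⟨by omega, by omega, by omega, by omega, by omega, by omega, by omega⟩

/-- The induced edge label: `f` assigns to each vertex the index of a Perrin number,
and an edge `uv` gets the label `(P (f u) + P (f v)) mod 2`. -/
def perrinEdgeLabel {V : Type*} (f : V → ℕ) : Sym2 V → ℕ :=
  Sym2.lift ⟨fun u v => (perrin (f u) + perrin (f v)) % 2, fun u v => by simp [Nat.add_comm]⟩

/-- `eCount G f i` is the number of edges of `G` whose induced label under `f` is `i`. -/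
noncomputable def eCount {V : Type*} (G : SimpleGraph V) (f : V → ℕ) (i : ℕ) : ℕ :=
  {e | e ∈ G.edgeSet ∧ perrinEdgeLabel f e = i}.ncard

/-- A finite simple graph `G` on `N` vertices is Perrin cordial if there is an injective
labeling of its vertices by indices in `{0, 1, ..., N}` such that the numbers of edges
with induced label `0` and `1` differ by at most `1`. -/
def IsPerrinCordial {V : Type*} [Fintype V] (G : SimpleGraph V) : Prop :=
  ∃ f : V → Fin (Fintype.card V + 1), Function.Injective f ∧
    |(eCount G (fun v => (f v : ℕ)) 0 : ℤ) - (eCount G (fun v => (f v : ℕ)) 1 : ℤ)| ≤ 1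

/-- the number of indices `i ∈ {0, ..., n}` with `P i` even. -/
theorem perrin_even_count (n p : ℕ) :
    ((n = 7 * p ∨ n = 7 * p + 1) →
      ((Finset.range (n + 1)).filter (fun i => Even (perrin i))).card = 3 * p + 1) ∧
    (n = 7 * p + 2 →
      ((Finset.range (n + 1)).filter (fun i => Even (perrin i))).card = 3 * p + 2) ∧
    ((n = 7 * p + 3 ∨ n = 7 * p + 4) →
      ((Finset.range (n + 1)).filter (fun i => Even (perrin i))).card = 3 * p + 3) ∧
    ((n = 7 * p + 5 ∨ n = 7 * p + 6) →
      ((Finset.range (n + 1)).filter (fun i => Even (perrin i))).card = 3 * p + 4) := by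
  have hc : ∀ m, ((Finset.range (m + 1)).filter (fun i => Even (perrin i))).card = pC m :=
    fun m => rfl
  have H := pC_main p
  refine ⟨?_, ?_, ?_, ?_⟩
  · rintro (rfl | rfl)
    · rcases Nat.eq_zero_or_eq_succ_pred p with hp | hp
      · subst hp; rw [hc]; decide
      · rw [hc]
        have h7 : 7 * p = 7 * (p-1) + 7 := by omega
        have := (pC_main (p-1)).2.2.2.2.2.2
        rw [h7, this]
        omega
    · rw [hc, H.1]
  · rintro rfl; rw [hc, H.2.1]
  · rintro (rfl | rfl)
    · rw [hc, H.2.2.1]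
    · rw [hc, H.2.2.2.1]
  · rintro (rfl | rfl)
    · rw [hc, H.2.2.2.2.1]
    · rw [hc, H.2.2.2.2.2.1]
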